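/- Let G be a graph with minimum degree δ(G) ≥ 1. Then γ_SMB'(G) = 3 if and only if both of the following hold: (i) G has no strong support vertices, and (ii) there exists a vertex u ∈ V(G) such that either G − u has at least two strong support vertices, or G − u has exactly one isolated vertex and a strong support vertex. -/

import Mathlib

/-!
Formalization of the Maker-Breaker domination game (MBD game).

In the MBD game on a graph `G`, Dominator and Staller alternately select
previously unplayed vertices.  Dominator wins when the set of vertices he has
selected is a dominating set of `G`; Staller wins when she has selected a
vertex of every dominating set of `G`, which happens exactly when the closed
neighbourhood of some vertex is entirely contained in her set of selected
vertices.
-/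

/-- `D` is a dominating set of `G` (as a finset of vertices). -/
def IsDomSet {V : Type*} (G : SimpleGraph V) (D : Finset V) : Prop :=
  ∀ v, v ∈ D ∨ ∃ u ∈ D, G.Adj u v

/-- Staller (whose selected vertices form `S`) has won: she owns the whole
closed neighbourhood of some vertex, hence a vertex of every dominating set. -/
def StallerWon {V : Type*} (G : SimpleGraph V) (S : Finset V) : Prop :=
  ∃ v, v ∈ S ∧ ∀ u, G.Adj v u → u ∈ S

section Game

variable {V : Type*} [DecidableEq V]

mutual
  /-- Position with Dominator's vertices `D`, Staller's vertices `S` and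
  Dominator to move: Dominator can guarantee to complete a dominating set
  using at most `k` further moves of his own. -/
  inductive DomWinD (G : SimpleGraph V) : Finset V → Finset V → ℕ → Prop where
    | done (D S : Finset V) (k : ℕ) : IsDomSet G D → DomWinD G D S k
    | step (D S : Finset V) (k : ℕ) (v : V) : v ∉ D → v ∉ S →
        DomWinS G (insert v D) S k → DomWinD G D S (k + 1)

  /-- Position with Dominator's vertices `D`, Staller's vertices `S` and
  Staller to move: Dominator can guarantee to complete a dominating set
  using at most `k` further moves of his own. -/
  inductive DomWinS (G : SimpleGraph V) : Finset V → Finset V → ℕ → Prop where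
    | done (D S : Finset V) (k : ℕ) : IsDomSet G D → DomWinS G D S k
    | step (D S : Finset V) (k : ℕ) : (∃ w, w ∉ D ∧ w ∉ S) →
        (∀ w, w ∉ D → w ∉ S → DomWinD G D (insert w S) k) → DomWinS G D S k
end

mutual
  /-- Position with Dominator's vertices `D`, Staller's vertices `S` and
  Staller to move: Staller can guarantee to claim a whole closed neighbourhood
  using at most `k` further moves of her own. -/
  inductive StalWinS (G : SimpleGraph V) : Finset V → Finset V → ℕ → Prop where
    | done (D S : Finset V) (k : ℕ) : StallerWon G S → StalWinS G D S k
    | step (D S : Finset V) (k : ℕ) (w : V) : w ∉ D → w ∉ S →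
        StalWinD G D (insert w S) k → StalWinS G D S (k + 1)

  /-- Position with Dominator's vertices `D`, Staller's vertices `S` and
  Dominator to move: Staller can guarantee to claim a whole closed
  neighbourhood using at most `k` further moves of her own. -/
  inductive StalWinD (G : SimpleGraph V) : Finset V → Finset V → ℕ → Prop where
    | done (D S : Finset V) (k : ℕ) : StallerWon G S → StalWinD G D S k
    | step (D S : Finset V) (k : ℕ) : (∃ v, v ∉ D ∧ v ∉ S) →
        (∀ v, v ∉ D → v ∉ S → StalWinS G (insert v D) S k) → StalWinD G D S k
end

/-- `γ_MB(G)`: minimum number of Dominator's moves with which he can guarantee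
to win the D-game (Dominator moves first); `⊤` if he cannot win it. -/
noncomputable def gammaMB (G : SimpleGraph V) : ℕ∞ :=
  sInf {k : ℕ∞ | ∃ n : ℕ, k = n ∧ DomWinD G ∅ ∅ n}

/-- `γ_MB'(G)`: minimum number of Dominator's moves with which he can guarantee
to win the S-game (Staller moves first); `⊤` if he cannot win it. -/
noncomputable def gammaMB' (G : SimpleGraph V) : ℕ∞ :=
  sInf {k : ℕ∞ | ∃ n : ℕ, k = n ∧ DomWinS G ∅ ∅ n}

/-- `γ_SMB(G)`: minimum number of Staller's moves with which she can guarantee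
to win the D-game (Dominator moves first); `⊤` if she cannot win it. -/
noncomputable def gammaSMB (G : SimpleGraph V) : ℕ∞ :=
  sInf {k : ℕ∞ | ∃ n : ℕ, k = n ∧ StalWinD G ∅ ∅ n}

/-- `γ_SMB'(G)`: minimum number of Staller's moves with which she can guarantee
to win the S-game (Staller moves first); `⊤` if she cannot win it. -/
noncomputable def gammaSMB' (G : SimpleGraph V) : ℕ∞ :=
  sInf {k : ℕ∞ | ∃ n : ℕ, k = n ∧ StalWinS G ∅ ∅ n}

/-- Outcome `𝒟`: Dominator has a winning strategy no matter who starts. -/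
def OutcomeD (G : SimpleGraph V) : Prop :=
  (∃ n, DomWinD G ∅ ∅ n) ∧ (∃ n, DomWinS G ∅ ∅ n)

/-- Outcome `𝒮`: Staller has a winning strategy no matter who starts. -/
def OutcomeS (G : SimpleGraph V) : Prop :=
  (∃ n, StalWinD G ∅ ∅ n) ∧ (∃ n, StalWinS G ∅ ∅ n)

/-- Outcome `𝒩`: the first player has a winning strategy. -/
def OutcomeN (G : SimpleGraph V) : Prop :=
  (∃ n, DomWinD G ∅ ∅ n) ∧ (∃ n, StalWinS G ∅ ∅ n)

end Game

/-- The corona product `G ⊙ H`: one copy of `G`, a copy of `H` for every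
vertex of `G`, and the `i`-th vertex of `G` joined to every vertex of the
`i`-th copy of `H`. -/
def coronaProd {α β : Type*} (G : SimpleGraph α) (H : SimpleGraph β) :
    SimpleGraph (α ⊕ α × β) where
  Adj x y :=
    match x, y with
    | Sum.inl a, Sum.inl a' => G.Adj a a'
    | Sum.inl a, Sum.inr p => a = p.1
    | Sum.inr p, Sum.inl a => a = p.1
    | Sum.inr p, Sum.inr q => p.1 = q.1 ∧ H.Adj p.2 q.2
  symm := by
    refine ⟨?_⟩
    rintro (a | p) (a' | q) h
    · exact G.adj_symm h
    · exact h
    · exact h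
    · exact ⟨h.1.symm, H.adj_symm h.2⟩
  loopless := by
    refine ⟨?_⟩
    rintro (a | p) h
    · exact G.irrefl h
    · exact H.irrefl h.2

/-- The domination number `γ(G)` of a finite graph. -/
noncomputable def domNumber {V : Type*} [Fintype V] (G : SimpleGraph V) : ℕ :=
  sInf {n : ℕ | ∃ D : Finset V, D.card = n ∧ IsDomSet G D}

/-- `v` is a dominating vertex: it is adjacent to all other vertices. -/
def IsDomVertex {V : Type*} (G : SimpleGraph V) (v : V) : Prop :=
  ∀ u, u ≠ v → G.Adj v u

/-- `v` is an isolated vertex (degree `0`). -/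
def IsIsolatedVertex {V : Type*} (G : SimpleGraph V) (v : V) : Prop :=
  ∀ u, ¬ G.Adj v u

/-- `v` is a leaf (degree `1`). -/
def IsLeaf {V : Type*} (G : SimpleGraph V) (v : V) : Prop :=
  ∃! u, G.Adj v u

/-- `v` is a strong support vertex: adjacent to at least two leaves. -/
def IsStrongSupport {V : Type*} (G : SimpleGraph V) (v : V) : Prop :=
  ∃ u w, u ≠ w ∧ G.Adj v u ∧ G.Adj v w ∧ IsLeaf G u ∧ IsLeaf G w

section Aux

variable {V : Type*} [DecidableEq V] (G : SimpleGraph V)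

/-- `x` is an isolated vertex of `G - u`. -/
def Iso' (u x : V) : Prop := x ≠ u ∧ ∀ z, G.Adj x z → z = u

/-- `a` is a leaf of `G - u` whose unique neighbour is `s`. -/
def Leaf' (u s a : V) : Prop :=
  a ≠ u ∧ s ≠ u ∧ G.Adj s a ∧ ∀ z, G.Adj a z → z = s ∨ z = u

/-- `s` is a strong support vertex of `G - u`. -/
def SS' (u s : V) : Prop := ∃ a b, a ≠ b ∧ Leaf' G u s a ∧ Leaf' G u s b

variable {G}

lemma SS'.ne_u {u s : V} (h : SS' G u s) : s ≠ u := by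
  obtain ⟨a, b, _, hla, _⟩ := h; exact hla.2.1

lemma stalWinS_zero {D S : Finset V} (h : StalWinS G D S 0) : StallerWon G S := by
  cases h with
  | done _ _ _ h => exact h

lemma stalWinD_zero {D S : Finset V} (h : StalWinD G D S 0) : StallerWon G S := by
  cases h with
  | done _ _ _ h => exact h
  | step _ _ _ hex hall =>
      obtain ⟨v, hv1, hv2⟩ := hex
      exact stalWinS_zero (hall v hv1 hv2)

lemma won_one {u : V} (h : StallerWon G ({u} : Finset V)) : ∀ z, ¬ G.Adj u z := by
  obtain ⟨x, hx, hnb⟩ := h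
  rw [Finset.mem_singleton] at hx
  subst hx
  intro z hz
  have := hnb z hz
  rw [Finset.mem_singleton] at this
  subst this
  exact G.irrefl hz

lemma won_two {u w : V} (h : StallerWon G (insert w ({u} : Finset V))) :
    (∀ z, G.Adj u z → z = w) ∨ (∀ z, G.Adj w z → z = u) := by
  obtain ⟨x, hx, hnb⟩ := h
  simp only [Finset.mem_insert, Finset.mem_singleton] at hx
  rcases hx with rfl | rfl
  · right
    intro z hz
    have := hnb z hz
    simp only [Finset.mem_insert, Finset.mem_singleton] at this
    rcases this with rfl | rfl
    · exact absurd hz (G.irrefl)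
    · rfl
  · left
    intro z hz
    have := hnb z hz
    simp only [Finset.mem_insert, Finset.mem_singleton] at this
    rcases this with rfl | rfl
    · rfl
    · exact absurd hz (G.irrefl)

lemma won_three {u w y : V} (h : StallerWon G (insert y (insert w ({u} : Finset V)))) :
    (∀ z, G.Adj u z → z = w ∨ z = y) ∨ (∀ z, G.Adj w z → z = u ∨ z = y) ∨
      (∀ z, G.Adj y z → z = u ∨ z = w) := by
  obtain ⟨x, hx, hnb⟩ := h
  simp only [Finset.mem_insert, Finset.mem_singleton] at hx
  rcases hx with rfl | rfl | rfl
  · refine Or.inr (Or.inr fun z hz => ?_)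
    have := hnb z hz
    simp only [Finset.mem_insert, Finset.mem_singleton] at this
    rcases this with rfl | rfl | rfl
    · exact absurd hz (G.irrefl)
    · exact Or.inr rfl
    · exact Or.inl rfl
  · refine Or.inr (Or.inl fun z hz => ?_)
    have := hnb z hz
    simp only [Finset.mem_insert, Finset.mem_singleton] at this
    rcases this with rfl | rfl | rfl
    · exact Or.inr rfl
    · exact absurd hz (G.irrefl)
    · exact Or.inl rfl
  · refine Or.inl fun z hz => ?_
    have := hnb z hz
    simp only [Finset.mem_insert, Finset.mem_singleton] at this
    rcases this with rfl | rfl | rfl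
    · exact Or.inr rfl
    · exact Or.inl rfl
    · exact absurd hz (G.irrefl)

/-- The master blocking lemma: if Dominator's first move `v` is adjacent-ish to `u`
(or `u` has three neighbours), kills all isolated vertices of `G - u` and all
double-leaf threats, then Staller (owning `u`) cannot win with two more moves. -/
lemma master {u v : V} (hδ : ∀ x, ∃ z, G.Adj x z) (hvu : v ≠ u)
    (hMA : ∀ w y : V, v ≠ w → v ≠ y → ∃ z, G.Adj u z ∧ z ≠ w ∧ z ≠ y)
    (hM3 : ∀ x, Iso' G u x → x = v)
    (hM4 : ∀ w a b, w ≠ u → w ≠ v → a ≠ b → a ≠ v → b ≠ v →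
        Leaf' G u w a → Leaf' G u w b → False) :
    ¬ StalWinS G ({v} : Finset V) ({u} : Finset V) 2 := by
  intro h
  cases h with
  | done _ _ _ hwon =>
      obtain ⟨z, hz⟩ := hδ u
      exact won_one hwon z hz
  | step _ _ _ w hw1 hw2 hD =>
      rw [Finset.mem_singleton] at hw1 hw2
      -- hw1 : ¬ w = v, hw2 : ¬ w = u
      have hnotWonUW : ¬ StallerWon G (insert w ({u} : Finset V)) := by
        intro hwon
        rcases won_two hwon with hl | hr
        · obtain ⟨z, hz, hzw, _⟩ := hMA w w (Ne.symm hw1) (Ne.symm hw1)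
          exact hzw (hl z hz)
        · exact hw1 (hM3 w ⟨hw2, hr⟩)
      -- decode a winning triple into a B- or C-threat
      have key : ∀ y, y ≠ u → y ≠ w → y ≠ v →
          StallerWon G (insert y (insert w ({u} : Finset V))) →
          (∀ z, G.Adj w z → z = u ∨ z = y) ∨ (∀ z, G.Adj y z → z = u ∨ z = w) := by
        intro y hyu hyw hyv hwon
        rcases won_three hwon with ha | hb | hc
        · obtain ⟨z, hz, hzw, hzy⟩ := hMA w y (Ne.symm hw1) (Ne.symm hyv)
          rcases ha z hz with rfl | rfl
          · exact absurd rfl hzw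
          · exact absurd rfl hzy
        · exact Or.inl fun z hz => (hb z hz).imp id (fun h => h)
        · exact Or.inr fun z hz => (hc z hz).imp id (fun h => h)
      -- threats are unique
      have uniq : ∀ y1 y2, y1 ≠ u → y1 ≠ w → y1 ≠ v →
          StallerWon G (insert y1 (insert w ({u} : Finset V))) →
          y2 ≠ u → y2 ≠ w → y2 ≠ v →
          StallerWon G (insert y2 (insert w ({u} : Finset V))) → y1 = y2 := by
        intro y1 y2 h1u h1w h1v hw1' h2u h2w h2v hw2'
        by_contra hne
        have resolveC : ∀ y, y ≠ u → y ≠ v → (∀ z, G.Adj y z → z = u ∨ z = w) →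
            Leaf' G u w y := by
          intro y hyu hyv hC
          by_cases hiso : ∀ z, G.Adj y z → z = u
          · exact absurd (hM3 y ⟨hyu, hiso⟩) hyv
          · push_neg at hiso
            obtain ⟨z, hz, hzu⟩ := hiso
            have hzw : z = w := by
              rcases hC z hz with h | h
              · exact absurd h hzu
              · exact h
            subst hzw
            exact ⟨hyu, hw2, G.adj_symm hz, fun z' hz' => (hC z' hz').symm⟩
        rcases key y1 h1u h1w h1v hw1' with hB1 | hC1 <;>
          rcases key y2 h2u h2w h2v hw2' with hB2 | hC2
        · -- B,B : w is isolated in G - u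
          apply hw1
          apply hM3 w
          refine ⟨hw2, fun z hz => ?_⟩
          rcases hB1 z hz with rfl | rfl
          · rfl
          · rcases hB2 _ hz with rfl | h
            · rfl
            · exact absurd h hne
        · -- B,C : y2 adjacent to w forces y2 = y1
          have hl2 := resolveC y2 h2u h2v hC2
          rcases hB1 y2 hl2.2.2.1 with h | h
          · exact h2u h
          · exact hne h.symm
        · -- C,B
          have hl1 := resolveC y1 h1u h1v hC1
          rcases hB2 y1 hl1.2.2.1 with h | h
          · exact h1u h
          · exact hne h
        · -- C,C : two leaves of w
          exact hM4 w y1 y2 hw2 hw1 hne h1v h2v (resolveC y1 h1u h1v hC1)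
            (resolveC y2 h2u h2v hC2)
      cases hD with
      | done _ _ _ hwon => exact hnotWonUW hwon
      | step _ _ _ hex hall =>
          by_cases hthr : ∃ y, y ≠ u ∧ y ≠ w ∧ y ≠ v ∧
              StallerWon G (insert y (insert w ({u} : Finset V)))
          · obtain ⟨y0, hy0u, hy0w, hy0v, hy0won⟩ := hthr
            have hy0D : y0 ∉ ({v} : Finset V) := by simpa using hy0v
            have hy0S : y0 ∉ insert w ({u} : Finset V) := by simp [hy0w, hy0u]
            have := hall y0 hy0D hy0S
            cases this with
            | done _ _ _ hwon => exact hnotWonUW hwon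
            | step _ _ _ y hyD hyS h0 =>
                simp only [Finset.mem_insert, Finset.mem_singleton, not_or] at hyD hyS
                have hwon := stalWinD_zero h0
                exact hyD.1 (uniq y y0 hyS.2 hyS.1 hyD.2 hwon hy0u hy0w hy0v hy0won)
          · obtain ⟨v2, hv2D, hv2S⟩ := hex
            have := hall v2 hv2D hv2S
            cases this with
            | done _ _ _ hwon => exact hnotWonUW hwon
            | step _ _ _ y hyD hyS h0 =>
                simp only [Finset.mem_insert, Finset.mem_singleton, not_or] at hyD hyS
                have hwon := stalWinD_zero h0
                exact hthr ⟨y, hyS.2, hyS.1, hyD.2, hwon⟩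

end Aux

section Aux2

variable {V : Type*} [DecidableEq V] {G : SimpleGraph V}

lemma insert_empty_eq (v : V) : insert v (∅ : Finset V) = ({v} : Finset V) := by
  ext x; simp

/-- A strong support vertex gives Staller a win in two moves in the S-game. -/
lemma stalWinS_two_of_SS {s : V} (h : IsStrongSupport G s) : StalWinS G ∅ ∅ 2 := by
  obtain ⟨a, b, hab, hsa, hsb, hla, hlb⟩ := h
  obtain ⟨za, hza, hzau⟩ := hla
  obtain ⟨zb, hzb, hzbu⟩ := hlb
  have hasu : ∀ z, G.Adj a z → z = s := by
    intro z hz; rw [hzau z hz, ← hzau s (G.adj_symm hsa)]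
  have hbsu : ∀ z, G.Adj b z → z = s := by
    intro z hz; rw [hzbu z hz, ← hzbu s (G.adj_symm hsb)]
  have has : a ≠ s := fun h => G.irrefl (v := s) (h ▸ hsa)
  have hbs : b ≠ s := fun h => G.irrefl (v := s) (h ▸ hsb)
  refine StalWinS.step _ _ 1 s (Finset.notMem_empty _) (Finset.notMem_empty _) ?_
  refine StalWinD.step _ _ 1 ⟨a, Finset.notMem_empty _, by simp [has]⟩ ?_
  intro v hv1 hv2
  by_cases hva : v = a
  · refine StalWinS.step _ _ 0 b (by simp [hva, Ne.symm hab]) (by simp [hbs]) ?_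
    refine StalWinD.done _ _ 0 ⟨b, by simp, fun z hz => by simp [hbsu z hz]⟩
  · refine StalWinS.step _ _ 0 a (by simp [Ne.symm, hva]) (by simp [has]) ?_
    refine StalWinD.done _ _ 0 ⟨a, by simp, fun z hz => by simp [hasu z hz]⟩

/-- Conversely, if Staller wins the S-game in two moves then `G` has a strong
support vertex. -/
lemma SS_of_stalWinS_two (hδ : ∀ x, ∃ z, G.Adj x z) (h : StalWinS G ∅ ∅ 2) :
    ∃ s, IsStrongSupport G s := by
  cases h with
  | done _ _ _ hwon => obtain ⟨x, hx, _⟩ := hwon; exact absurd hx (Finset.notMem_empty _)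
  | step _ _ _ u hu1 hu2 hD =>
      rw [_root_.insert_empty_eq] at hD
      cases hD with
      | done _ _ _ hwon => obtain ⟨z, hz⟩ := hδ u; exact absurd hz (won_one hwon z)
      | step _ _ _ hex hall =>
          have H : ∀ v, v ≠ u → ∃ y, y ≠ u ∧ y ≠ v ∧
              StallerWon G (insert y ({u} : Finset V)) := by
            intro v hvu
            have := hall v (Finset.notMem_empty _) (by simp [hvu])
            cases this with
            | done _ _ _ hwon => obtain ⟨z, hz⟩ := hδ u; exact absurd hz (won_one hwon z)
            | step _ _ _ y hyD hyS h0 =>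
                have hyv : y ≠ v := fun h => hyD (by simp [h])
                have hyu : y ≠ u := fun h => hyS (by simp [h])
                exact ⟨y, hyu, hyv, stalWinD_zero h0⟩
          obtain ⟨v0, _, hv0⟩ := hex
          rw [Finset.mem_singleton] at hv0
          obtain ⟨y1, h1u, _, hw1⟩ := H v0 hv0
          obtain ⟨y2, h2u, h21, hw2⟩ := H y1 h1u
          have leafy : ∀ y, y ≠ u → (∀ z, G.Adj y z → z = u) → IsLeaf G y ∧ G.Adj u y := by
            intro y hyu hy
            obtain ⟨z, hz⟩ := hδ y
            have hzu : z = u := hy z hz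
            have hz' : G.Adj y u := hzu ▸ hz
            exact ⟨⟨u, hz', hy⟩, G.adj_symm hz'⟩
          rcases won_two hw1 with ha1 | hb1 <;> rcases won_two hw2 with ha2 | hb2
          · obtain ⟨z, hz⟩ := hδ u
            exact absurd (ha2 z hz) (ha1 z hz ▸ Ne.symm h21)
          · obtain ⟨hl2, hu2'⟩ := leafy y2 h2u hb2
            exact absurd (ha1 y2 hu2') h21
          · obtain ⟨hl1, hu1'⟩ := leafy y1 h1u hb1
            exact absurd (ha2 y1 hu1').symm h21
          · obtain ⟨hl1, hu1'⟩ := leafy y1 h1u hb1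
            obtain ⟨hl2, hu2'⟩ := leafy y2 h2u hb2
            exact ⟨u, y2, y1, h21, hu2', hu1', hl2, hl1⟩

/-- A gadget in `G - u`: either an isolated vertex (`a = b = s`) or a strong
support vertex `s` with two leaves `a ≠ b`. -/
def Gad (G : SimpleGraph V) (u s a b : V) : Prop :=
  (Iso' G u s ∧ a = s ∧ b = s) ∨ (Leaf' G u s a ∧ Leaf' G u s b ∧ a ≠ b)

lemma Gad.ne_u {u s a b : V} (h : Gad G u s a b) : s ≠ u := by
  rcases h with ⟨h, _, _⟩ | ⟨h, _, _⟩
  · exact h.1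
  · exact h.2.1

/-- With a whole gadget untouched by Dominator's first move, Staller wins in
two more moves. -/
lemma gad_win2 {u v s a b : V} (hg : Gad G u s a b) (hvu : v ≠ u)
    (hvs : v ≠ s) (hva : v ≠ a) (hvb : v ≠ b) :
    StalWinS G ({v} : Finset V) ({u} : Finset V) 2 := by
  rcases hg with ⟨hiso, -, -⟩ | ⟨hla, hlb, hab⟩
  · refine StalWinS.step _ _ 1 s (by simp [Ne.symm hvs]) (by simp [hiso.1]) ?_
    refine StalWinD.done _ _ 1 ⟨s, by simp, fun z hz => by simp [hiso.2 z hz]⟩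
  · have hsu : s ≠ u := hla.2.1
    have has : a ≠ s := fun h => G.irrefl (v := s) (h ▸ hla.2.2.1)
    have hbs : b ≠ s := fun h => G.irrefl (v := s) (h ▸ hlb.2.2.1)
    refine StalWinS.step _ _ 1 s (by simp [Ne.symm hvs]) (by simp [hsu]) ?_
    refine StalWinD.step _ _ 1 ⟨a, by simp [Ne.symm hva], by simp [has, hla.1]⟩ ?_
    intro v2 hv2D hv2S
    simp only [Finset.mem_insert, Finset.mem_singleton, not_or] at hv2D hv2S
    by_cases hva2 : v2 = a
    · refine StalWinS.step _ _ 0 b (by simp [hva2, Ne.symm hab, Ne.symm hvb]) (by simp [hbs, hlb.1]) ?_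
      refine StalWinD.done _ _ 0 ⟨b, by simp, fun z hz => ?_⟩
      rcases hlb.2.2.2 z hz with rfl | rfl <;> simp
    · have hav2 : a ≠ v2 := fun h => hva2 h.symm
      refine StalWinS.step _ _ 0 a (by simp [Ne.symm hva, hav2]) (by simp [has, hla.1]) ?_
      refine StalWinD.done _ _ 0 ⟨a, by simp, fun z hz => ?_⟩
      rcases hla.2.2.2 z hz with rfl | rfl <;> simp

/-- Two disjoint gadgets in `G - u` give Staller a win in three moves. -/
lemma gad_win3 {u s a b s' a' b' : V} (hnu : u ≠ s ∧ u ≠ a ∧ u ≠ b ∧ u ≠ s' ∧ u ≠ a' ∧ u ≠ b')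
    (hg : Gad G u s a b) (hg' : Gad G u s' a' b')
    (hdisj : ∀ x : V, ¬ ((x = s ∨ x = a ∨ x = b) ∧ (x = s' ∨ x = a' ∨ x = b'))) :
    StalWinS G ∅ ∅ 3 := by
  refine StalWinS.step _ _ 2 u (Finset.notMem_empty _) (Finset.notMem_empty _) ?_
  rw [_root_.insert_empty_eq]
  refine StalWinD.step _ _ 2 ⟨s, Finset.notMem_empty _, by simp [hg.ne_u]⟩ ?_
  intro v hv1 hv2
  rw [Finset.mem_singleton] at hv2
  rw [_root_.insert_empty_eq]
  have : ¬ (v = s ∨ v = a ∨ v = b) ∨ ¬ (v = s' ∨ v = a' ∨ v = b') := by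
    by_contra hc
    push_neg at hc
    exact hdisj v ⟨hc.1, hc.2⟩
  rcases this with hfree | hfree
  · push_neg at hfree
    exact gad_win2 hg hv2 hfree.1 hfree.2.1 hfree.2.2
  · push_neg at hfree
    exact gad_win2 hg' hv2 hfree.1 hfree.2.1 hfree.2.2

end Aux2

section Aux3

variable {V : Type*} [DecidableEq V] {G : SimpleGraph V}

/-- Two distinct `G`-leaves at a common vertex contradict "no strong support". -/
lemma not_two_gleaves (hi : ∀ v, ¬ IsStrongSupport G v) {s a b : V} (hab : a ≠ b)
    (hsa : G.Adj s a) (hsb : G.Adj s b) (ha : ∀ z, G.Adj a z → z = s)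
    (hb : ∀ z, G.Adj b z → z = s) : False :=
  hi s ⟨a, b, hab, hsa, hsb, ⟨s, G.adj_symm hsa, ha⟩, ⟨s, G.adj_symm hsb, hb⟩⟩

lemma iso_adj (hδ : ∀ x, ∃ z, G.Adj x z) {u x : V} (h : Iso' G u x) : G.Adj u x := by
  obtain ⟨z, hz⟩ := hδ x
  have := h.2 z hz
  subst this
  exact G.adj_symm hz

/-- Under (i), `G - u` has at most one isolated vertex. -/
lemma iso_unique (hδ : ∀ x, ∃ z, G.Adj x z) (hi : ∀ v, ¬ IsStrongSupport G v)
    {u x y : V} (hx : Iso' G u x) (hy : Iso' G u y) : x = y := by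
  by_contra hne
  exact not_two_gleaves hi hne (iso_adj hδ hx) (iso_adj hδ hy) hx.2 hy.2

/-- A leaf of a support `s` in `G - u` is not another strong support vertex. -/
lemma leaf_ne_SS {u s t ℓ : V} (hl : Leaf' G u s ℓ) (ht : SS' G u t) (hst : s ≠ t) :
    ℓ ≠ t := by
  rintro rfl
  obtain ⟨a, b, hab, hla, hlb⟩ := ht
  have ha : a = s := by
    rcases hl.2.2.2 a (hla.2.2.1) with h | h
    · exact h
    · exact absurd h hla.1
  have hb : b = s := by
    rcases hl.2.2.2 b (hlb.2.2.1) with h | h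
    · exact h
    · exact absurd h hlb.1
  exact hab (ha.trans hb.symm)

/-- Leaves of distinct supports in `G - u` are distinct. -/
lemma leaf_ne_leaf {u s t ℓ ℓ' : V} (hl : Leaf' G u s ℓ) (hl' : Leaf' G u t ℓ')
    (hst : s ≠ t) : ℓ ≠ ℓ' := by
  rintro rfl
  rcases hl.2.2.2 t (G.adj_symm hl'.2.2.1) with h | h
  · exact hst h.symm
  · exact hl'.2.1 h

lemma iso_ne_leaf {u x s ℓ : V} (hx : Iso' G u x) (hl : Leaf' G u s ℓ) :
    x ≠ s ∧ x ≠ ℓ := by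
  constructor
  · rintro rfl
    exact hl.1 (hx.2 ℓ hl.2.2.1)
  · rintro rfl
    exact hl.2.1 (hx.2 s (G.adj_symm hl.2.2.1))

/-- Condition (ii) at `u` (primed form). -/
def CondA (G : SimpleGraph V) (u : V) : Prop :=
  ∃ s1 s2, s1 ≠ s2 ∧ SS' G u s1 ∧ SS' G u s2

def CondB (G : SimpleGraph V) (u : V) : Prop :=
  (∃ x, Iso' G u x) ∧ (∃ s, SS' G u s)

lemma leaf'_ne {u s a : V} (h : Leaf' G u s a) : a ≠ s :=
  fun hh => G.irrefl (v := s) (hh ▸ h.2.2.1)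

/-- Under condition (ii) at some vertex `u`, Staller wins the S-game in three
moves. -/
lemma stalWinS_three_of_cond {u : V} (h : CondA G u ∨ CondB G u) :
    StalWinS G ∅ ∅ 3 := by
  rcases h with ⟨s1, s2, hne, hss1, hss2⟩ | ⟨⟨x, hx⟩, ⟨s, a, b, hab, hla, hlb⟩⟩
  · obtain ⟨a1, b1, hab1, hla1, hlb1⟩ := hss1
    obtain ⟨a2, b2, hab2, hla2, hlb2⟩ := hss2
    refine gad_win3 (u := u) ?_ (Or.inr ⟨hla1, hlb1, hab1⟩) (Or.inr ⟨hla2, hlb2, hab2⟩) ?_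
    · exact ⟨Ne.symm hla1.2.1, Ne.symm hla1.1, Ne.symm hlb1.1,
        Ne.symm hla2.2.1, Ne.symm hla2.1, Ne.symm hlb2.1⟩
    · rintro z ⟨h1, h2⟩
      rcases h1 with rfl | rfl | rfl <;> rcases h2 with rfl | rfl | rfl
      · exact hne rfl
      · exact leaf_ne_SS hla2 ⟨a1, b1, hab1, hla1, hlb1⟩ (Ne.symm hne) rfl
      · exact leaf_ne_SS hlb2 ⟨a1, b1, hab1, hla1, hlb1⟩ (Ne.symm hne) rfl
      · exact leaf_ne_SS hla1 ⟨a2, b2, hab2, hla2, hlb2⟩ hne rfl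
      · exact leaf_ne_leaf hla1 hla2 hne rfl
      · exact leaf_ne_leaf hla1 hlb2 hne rfl
      · exact leaf_ne_SS hlb1 ⟨a2, b2, hab2, hla2, hlb2⟩ hne rfl
      · exact leaf_ne_leaf hlb1 hla2 hne rfl
      · exact leaf_ne_leaf hlb1 hlb2 hne rfl
  · have h1 := iso_ne_leaf hx hla
    have h2 := iso_ne_leaf hx hlb
    refine gad_win3 (u := u) ?_ (Or.inl ⟨hx, rfl, rfl⟩) (Or.inr ⟨hla, hlb, hab⟩) ?_
    · exact ⟨Ne.symm hx.1, Ne.symm hx.1, Ne.symm hx.1,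
        Ne.symm hla.2.1, Ne.symm hla.1, Ne.symm hlb.1⟩
    · rintro z ⟨h1', h2'⟩
      rcases h1' with rfl | rfl | rfl <;>
        rcases h2' with rfl | rfl | rfl <;>
          first
            | exact h1.1 rfl
            | exact h1.2 rfl
            | exact h2.2 rfl

end Aux3

section Aux4

variable {V : Type*} [DecidableEq V] {G : SimpleGraph V}

lemma MA_of_three {u p q r : V} (h1 : p ≠ q) (h2 : p ≠ r) (h3 : q ≠ r)
    (hp : G.Adj u p) (hq : G.Adj u q) (hr : G.Adj u r) :
    ∀ w y : V, ∃ z, G.Adj u z ∧ z ≠ w ∧ z ≠ y := by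
  intro w y
  by_cases hpw : p = w
  · subst hpw
    by_cases hqy : q = y
    · subst hqy
      exact ⟨r, hr, Ne.symm h2, Ne.symm h3⟩
    · exact ⟨q, hq, Ne.symm h1, hqy⟩
  · by_cases hpy : p = y
    · subst hpy
      by_cases hqw : q = w
      · subst hqw
        exact ⟨r, hr, Ne.symm h3, Ne.symm h2⟩
      · exact ⟨q, hq, hqw, Ne.symm h1⟩
    · exact ⟨p, hp, hpw, hpy⟩

/-- If Staller, having played `u`, beats every Dominator reply within two more
moves, then condition (ii) holds (at `u`, or in one exceptional case at a
support vertex). -/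
lemma extract (hδ : ∀ x, ∃ z, G.Adj x z) (hi : ∀ v, ¬ IsStrongSupport G v) {u : V}
    (Hwin : ∀ v, v ≠ u → StalWinS G ({v} : Finset V) ({u} : Finset V) 2)
    (hnot : ∀ u', ¬ (CondA G u' ∨ CondB G u')) : False := by
  have F2 : ∀ s1 s2, SS' G u s1 → SS' G u s2 → s1 = s2 := by
    intro s1 s2 hh1 hh2
    by_contra hne
    exact hnot u (Or.inl ⟨s1, s2, hne, hh1, hh2⟩)
  by_cases hSS : ∃ s, SS' G u s
  · obtain ⟨s, hs⟩ := hSS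
    have hIsoNone : ∀ x, ¬ Iso' G u x := fun x hx => hnot u (Or.inr ⟨⟨x, hx⟩, ⟨s, hs⟩⟩)
    obtain ⟨a, b, hab, hla, hlb⟩ := hs
    have hssu : SS' G u s := ⟨a, b, hab, hla, hlb⟩
    by_cases h3 : ∃ p q r, p ≠ q ∧ p ≠ r ∧ q ≠ r ∧ G.Adj u p ∧ G.Adj u q ∧ G.Adj u r
    · obtain ⟨p, q, r, hh1, hh2, hh3, hp, hq, hr⟩ := h3
      refine master hδ hla.2.1 (fun w y _ _ => MA_of_three hh1 hh2 hh3 hp hq hr w y)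
        (fun x hx => absurd hx (hIsoNone x))
        (fun w a' b' hwu hws hab' _ _ hl1 hl2 =>
          hws (F2 w s ⟨a', b', hab', hl1, hl2⟩ hssu)) (Hwin s hla.2.1)
    · -- `u` has at most two neighbours
      have leaf_u_or_gleaf : ∀ c, Leaf' G u s c → G.Adj u c ∨ (∀ z, G.Adj c z → z = s) := by
        intro c hc
        by_cases hcg : ∀ z, G.Adj c z → z = s
        · exact Or.inr hcg
        · push_neg at hcg
          obtain ⟨z, hz, hzs⟩ := hcg
          have hzu : z = u := by
            rcases hc.2.2.2 z hz with h | h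
            · exact absurd h hzs
            · exact h
          subst hzu
          exact Or.inl (G.adj_symm hz)
      have hpex : ∃ p, Leaf' G u s p ∧ G.Adj u p := by
        rcases leaf_u_or_gleaf a hla with h | hga
        · exact ⟨a, hla, h⟩
        · rcases leaf_u_or_gleaf b hlb with h | hgb
          · exact ⟨b, hlb, h⟩
          · exact (not_two_gleaves hi hab hla.2.2.1 hlb.2.2.1 hga hgb).elim
      obtain ⟨p, hlp, hup⟩ := hpex
      by_cases hq : ∃ q, Leaf' G u s q ∧ G.Adj u q ∧ q ≠ p
      · obtain ⟨q, hlq, huq, hqp⟩ := hq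
        by_cases hc : ∃ c, Leaf' G u s c ∧ c ≠ p ∧ c ≠ q
        · obtain ⟨c, hlc, hcp, hcq⟩ := hc
          have hcg : ∀ z, G.Adj c z → z = s := by
            rcases leaf_u_or_gleaf c hlc with h | h
            · exact absurd ⟨p, q, c, Ne.symm hqp, Ne.symm hcp, Ne.symm hcq, hup, huq, h⟩ h3
            · exact h
          -- condition (ii) holds at `s` instead
          apply hnot s
          right
          refine ⟨⟨c, Ne.symm (G.ne_of_adj hlc.2.2.1), hcg⟩,
            ⟨u, p, q, Ne.symm hqp, ?_, ?_⟩⟩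
          · exact ⟨leaf'_ne hlp, Ne.symm hlp.2.1, hup,
              fun z hz => (hlp.2.2.2 z hz).symm⟩
          · exact ⟨leaf'_ne hlq, Ne.symm hlq.2.1, huq,
              fun z hz => (hlq.2.2.2 z hz).symm⟩
        · -- all leaves of `s` lie in `{p, q}`; Dominator plays `p`
          have hc' : ∀ c, Leaf' G u s c → c = p ∨ c = q := by
            intro c hcl
            by_contra hcc
            push_neg at hcc
            exact hc ⟨c, hcl, hcc.1, hcc.2⟩
          refine master hδ hlp.1 (fun w y hvw hvy => ⟨p, hup, hvw, hvy⟩)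
            (fun x hx => absurd hx (hIsoNone x))
            (fun w a' b' hwu hwp hab' hap hbp hl1 hl2 => ?_) (Hwin p hlp.1)
          have hws := F2 w s ⟨a', b', hab', hl1, hl2⟩ hssu
          subst hws
          have h1 : a' = q := (hc' a' hl1).resolve_left hap
          have h2 : b' = q := (hc' b' hl2).resolve_left hbp
          exact hab' (h1.trans h2.symm)
      · -- `p` is the only `u`-adjacent leaf of `s`; Dominator plays `p`
        have hforce : ∀ c, Leaf' G u s c → c ≠ p → ∀ z, G.Adj c z → z = s := by
          intro c hcl hcp
          rcases leaf_u_or_gleaf c hcl with h | h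
          · exact absurd ⟨c, hcl, h, hcp⟩ hq
          · exact h
        refine master hδ hlp.1 (fun w y hvw hvy => ⟨p, hup, hvw, hvy⟩)
          (fun x hx => absurd hx (hIsoNone x))
          (fun w a' b' hwu hwp hab' hap hbp hl1 hl2 => ?_) (Hwin p hlp.1)
        have hws := F2 w s ⟨a', b', hab', hl1, hl2⟩ hssu
        subst hws
        exact not_two_gleaves hi hab' hl1.2.2.1 hl2.2.2.1
          (hforce a' hl1 hap) (hforce b' hl2 hbp)
  · by_cases hx : ∃ x, Iso' G u x
    · obtain ⟨x, hxi⟩ := hx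
      refine master hδ hxi.1 (fun w y hvw hvy => ⟨x, iso_adj hδ hxi, hvw, hvy⟩)
        (fun y hy => iso_unique hδ hi hy hxi)
        (fun w a' b' _ _ hab' _ _ hl1 hl2 => hSS ⟨w, a', b', hab', hl1, hl2⟩)
        (Hwin x hxi.1)
    · obtain ⟨z0, hz0⟩ := hδ u
      have hz0u : z0 ≠ u := Ne.symm (G.ne_of_adj hz0)
      refine master hδ hz0u (fun w y hvw hvy => ⟨z0, hz0, hvw, hvy⟩)
        (fun y hy => absurd ⟨y, hy⟩ hx)
        (fun w a' b' _ _ hab' _ _ hl1 hl2 => hSS ⟨w, a', b', hab', hl1, hl2⟩)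
        (Hwin z0 hz0u)

end Aux4

section Aux5

variable {V : Type*} [DecidableEq V] {G : SimpleGraph V}

lemma not_stalWinS_zero : ¬ StalWinS G ∅ ∅ 0 := by
  intro h
  obtain ⟨x, hx, _⟩ := stalWinS_zero h
  exact Finset.notMem_empty _ hx

lemma not_stalWinS_one (hδ : ∀ x, ∃ z, G.Adj x z) : ¬ StalWinS G ∅ ∅ 1 := by
  intro h
  cases h with
  | done _ _ _ hwon => obtain ⟨x, hx, _⟩ := hwon; exact Finset.notMem_empty _ hx
  | step _ _ _ w _ _ hD =>
      have := stalWinD_zero hD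
      rw [_root_.insert_empty_eq] at this
      obtain ⟨z, hz⟩ := hδ w
      exact won_one this z hz

lemma gamma_char (hδ : ∀ x, ∃ z, G.Adj x z) :
    gammaSMB' G = 3 ↔ (StalWinS G ∅ ∅ 3 ∧ ¬ StalWinS G ∅ ∅ 2) := by
  constructor
  · intro h
    have h2 : ¬ StalWinS G ∅ ∅ 2 := by
      intro hw
      have hmem : (2 : ℕ∞) ∈ {k : ℕ∞ | ∃ n : ℕ, k = n ∧ StalWinS G ∅ ∅ n} :=
        ⟨2, by norm_num, hw⟩
      have := sInf_le hmem
      rw [show sInf {k : ℕ∞ | ∃ n : ℕ, k = n ∧ StalWinS G ∅ ∅ n} = gammaSMB' G from rfl,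
        h] at this
      norm_num at this
    refine ⟨?_, h2⟩
    have hlt : sInf {k : ℕ∞ | ∃ n : ℕ, k = n ∧ StalWinS G ∅ ∅ n} < 4 := by
      rw [show sInf {k : ℕ∞ | ∃ n : ℕ, k = n ∧ StalWinS G ∅ ∅ n} = gammaSMB' G from rfl, h]
      norm_num
    obtain ⟨k, hk, hk4⟩ := sInf_lt_iff.mp hlt
    obtain ⟨n, rfl, hw⟩ := hk
    have hmem2 : (n : ℕ∞) ∈ {k : ℕ∞ | ∃ m : ℕ, k = (m : ℕ∞) ∧ StalWinS G ∅ ∅ m} :=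
      ⟨n, rfl, hw⟩
    have hge := sInf_le hmem2
    rw [show sInf {k : ℕ∞ | ∃ m : ℕ, k = (m : ℕ∞) ∧ StalWinS G ∅ ∅ m} = gammaSMB' G from
      rfl, h] at hge
    have h1 : 3 ≤ n := by exact_mod_cast hge
    have h2' : n < 4 := by exact_mod_cast hk4
    have : n = 3 := by omega
    subst this
    exact hw
  · rintro ⟨h3, h2⟩
    refine le_antisymm ?_ ?_
    · exact sInf_le ⟨3, by norm_num, h3⟩
    · refine le_sInf ?_
      rintro k ⟨n, rfl, hw⟩
      have : ¬ n < 3 := by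
        intro hn
        interval_cases n
        · exact not_stalWinS_zero hw
        · exact not_stalWinS_one hδ hw
        · exact h2 hw
      have h3n : 3 ≤ n := by omega
      exact_mod_cast Nat.cast_le.mpr h3n

end Aux5

section Aux6

variable {V : Type*} [DecidableEq V] {G : SimpleGraph V}

lemma SS_bridge {u : V} (v : ({x : V | x ≠ u} : Set V)) :
    IsStrongSupport (G.induce {x : V | x ≠ u}) v ↔ SS' G u ↑v := by
  constructor
  · rintro ⟨a, b, hab, hva, hvb, hla, hlb⟩
    have hva' : G.Adj ↑v ↑a := hva
    have hvb' : G.Adj ↑v ↑b := hvb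
    have mkLeaf : ∀ (c : ({x : V | x ≠ u} : Set V)),
        IsLeaf (G.induce {x : V | x ≠ u}) c → G.Adj ↑v ↑c → Leaf' G u ↑v ↑c := by
      rintro c ⟨w0, hw0, huniq⟩ hvc
      refine ⟨c.2, v.2, hvc, fun z hz => ?_⟩
      by_cases hzu : z = u
      · exact Or.inr hzu
      · left
        have h1 : (⟨z, hzu⟩ : ({x : V | x ≠ u} : Set V)) = w0 := huniq ⟨z, hzu⟩ hz
        have h2 : v = w0 := huniq v (G.adj_symm hvc)
        have := h1.trans h2.symm
        exact congrArg Subtype.val this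
    exact ⟨↑a, ↑b, fun h => hab (Subtype.ext h), mkLeaf a hla hva', mkLeaf b hlb hvb'⟩
  · rintro ⟨a, b, hab, hla, hlb⟩
    refine ⟨⟨a, hla.1⟩, ⟨b, hlb.1⟩, fun h => hab (congrArg Subtype.val h),
      hla.2.2.1, hlb.2.2.1, ?_, ?_⟩
    · exact ⟨v, G.adj_symm hla.2.2.1,
        fun z hz => Subtype.ext ((hla.2.2.2 ↑z hz).resolve_right z.2)⟩
    · exact ⟨v, G.adj_symm hlb.2.2.1,
        fun z hz => Subtype.ext ((hlb.2.2.2 ↑z hz).resolve_right z.2)⟩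

lemma iso_bridge {u : V} (x : ({x : V | x ≠ u} : Set V)) :
    IsIsolatedVertex (G.induce {x : V | x ≠ u}) x ↔ Iso' G u ↑x := by
  constructor
  · intro h
    refine ⟨x.2, fun z hz => ?_⟩
    by_contra hzu
    exact h ⟨z, hzu⟩ hz
  · rintro ⟨_, h2⟩ w hw
    exact w.2 (h2 ↑w hw)

lemma cond_bridge (hδ : ∀ x, ∃ z, G.Adj x z) (hi : ∀ v, ¬ IsStrongSupport G v) (u : V) :
    (CondA G u ∨ CondB G u) ↔
      ((∃ v w : ({x : V | x ≠ u} : Set V), v ≠ w ∧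
          IsStrongSupport (G.induce {x : V | x ≠ u}) v ∧
          IsStrongSupport (G.induce {x : V | x ≠ u}) w) ∨
        ((∃! v : ({x : V | x ≠ u} : Set V),
            IsIsolatedVertex (G.induce {x : V | x ≠ u}) v) ∧
          ∃ v : ({x : V | x ≠ u} : Set V),
            IsStrongSupport (G.induce {x : V | x ≠ u}) v)) := by
  constructor
  · rintro (⟨s1, s2, hne, h1, h2⟩ | ⟨⟨x, hx⟩, ⟨s, hs⟩⟩)
    · exact Or.inl ⟨⟨s1, h1.ne_u⟩, ⟨s2, h2.ne_u⟩,
        fun h => hne (congrArg Subtype.val h),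
        (SS_bridge _).mpr h1, (SS_bridge _).mpr h2⟩
    · refine Or.inr ⟨⟨⟨x, hx.1⟩, (iso_bridge _).mpr hx, fun y hy => ?_⟩,
        ⟨⟨s, hs.ne_u⟩, (SS_bridge _).mpr hs⟩⟩
      exact Subtype.ext (iso_unique hδ hi ((iso_bridge y).mp hy) hx)
  · rintro (⟨v, w, hne, h1, h2⟩ | ⟨⟨x0, hx0, _⟩, ⟨v, hv⟩⟩)
    · exact Or.inl ⟨↑v, ↑w, fun h => hne (Subtype.ext h),
        (SS_bridge _).mp h1, (SS_bridge _).mp h2⟩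
    · exact Or.inr ⟨⟨↑x0, (iso_bridge _).mp hx0⟩, ⟨↑v, (SS_bridge _).mp hv⟩⟩

end Aux6

theorem gammaSMB'_eq_three_iff' {V : Type*} [Fintype V] [DecidableEq V]
    (G : SimpleGraph V) (hdelta : ∀ v, ∃ u, G.Adj v u) :
    gammaSMB' G = 3 ↔
      ((∀ v, ¬ IsStrongSupport G v) ∧
        ∃ u : V,
          (∃ v w : ({x : V | x ≠ u} : Set V), v ≠ w ∧
              IsStrongSupport (G.induce {x : V | x ≠ u}) v ∧
              IsStrongSupport (G.induce {x : V | x ≠ u}) w) ∨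
          ((∃! v : ({x : V | x ≠ u} : Set V),
              IsIsolatedVertex (G.induce {x : V | x ≠ u}) v) ∧
            ∃ v : ({x : V | x ≠ u} : Set V),
              IsStrongSupport (G.induce {x : V | x ≠ u}) v)) := by
  rw [gamma_char hdelta]
  constructor
  · rintro ⟨h3, h2⟩
    have hi : ∀ v, ¬ IsStrongSupport G v := fun v hv => h2 (stalWinS_two_of_SS hv)
    refine ⟨hi, ?_⟩
    by_contra hnot'
    have hnot : ∀ u', ¬ (CondA G u' ∨ CondB G u') := by
      intro u' hc
      exact hnot' ⟨u', (cond_bridge hdelta hi u').mp hc⟩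
    cases h3 with
    | done _ _ _ hwon =>
        obtain ⟨x, hx, _⟩ := hwon
        exact Finset.notMem_empty _ hx
    | step _ _ _ u hu1 hu2 hD =>
        rw [_root_.insert_empty_eq] at hD
        cases hD with
        | done _ _ _ hwon =>
            obtain ⟨z, hz⟩ := hdelta u
            exact won_one hwon z hz
        | step _ _ _ hex hall =>
            refine extract hdelta hi (u := u) ?_ hnot
            intro v hvu
            have := hall v (Finset.notMem_empty _) (by simp [hvu])
            rwa [_root_.insert_empty_eq] at this
  · rintro ⟨hi, u, hcond⟩
    have hc : CondA G u ∨ CondB G u := (cond_bridge hdelta hi u).mpr hcond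
    refine ⟨stalWinS_three_of_cond hc, fun h2 => ?_⟩
    obtain ⟨s, hs⟩ := SS_of_stalWinS_two hdelta h2
    exact hi s hs


/-- Let `G` be a graph with `δ(G) ≥ 1`.  Then `γ_SMB'(G) = 3` if and only if
(i) `G` has no strong support vertices, and (ii) there is a vertex `u` such
that either `G - u` has at least two strong support vertices, or `G - u` has
exactly one isolated vertex and a strong support vertex. -/
theorem gammaSMB'_eq_three_iff {V : Type*} [Fintype V] [DecidableEq V]
    (G : SimpleGraph V) (hdelta : ∀ v, ∃ u, G.Adj v u) :
    gammaSMB' G = 3 ↔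
      ((∀ v, ¬ IsStrongSupport G v) ∧
        ∃ u : V,
          (∃ v w : ({x : V | x ≠ u} : Set V), v ≠ w ∧
              IsStrongSupport (G.induce {x : V | x ≠ u}) v ∧
              IsStrongSupport (G.induce {x : V | x ≠ u}) w) ∨
          ((∃! v : ({x : V | x ≠ u} : Set V),
              IsIsolatedVertex (G.induce {x : V | x ≠ u}) v) ∧
            ∃ v : ({x : V | x ≠ u} : Set V),
              IsStrongSupport (G.induce {x : V | x ≠ u}) v)) := by
  exact gammaSMB'_eq_three_iff' G hdelta
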